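/- arXiv:2003.02743 — 4 statements merged into one kernel-verified Lean document; each statement's English description precedes it below -/
import Mathlib

section
/- Fix an integer n ≥ 1, reals ω₀, ω₁ with |ω₀ − 1/2| + |ω₁| < 1/2, and an initial outcome x₋₁ ∈ {−1,1}. Define p₀ = ω₀ + ω₁x₋₁, p_∞ = (ω₀ − ω₁)/(1 − 2ω₁), λ_n = (1/n)·(1 − (2ω₁)ⁿ)/(1 − 2ω₁), and K_n = 2(λ_n·p₀ + (1−λ_n)·p_∞) − 1. Then K_n ∈ (−1,1) and the expected logarithmic growth ELG(K) = (1/n) Σ_X P(X) Σ_{k=0}^{n−1} log(1 + K·X_k) attains its unique maximum over K ∈ (−1,1) at K = K_n; i.e., ELG(K) < ELG(K_n) for all K ∈ (−1,1) with K ≠ K_n. -/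
open Finset

/-- The outcome preceding flip `k` in a path `X ∈ {-1,1}ⁿ` with initial outcome `xm1 = x₋₁`. -/
noncomputable def prevOutcome (n : ℕ) (xm1 : ℝ) (X : Fin n → ({-1, 1} : Finset ℝ))
    (k : Fin n) : ℝ :=
  if (k : ℕ) = 0 then xm1
  else (X ⟨(k : ℕ) - 1, Nat.lt_of_le_of_lt (Nat.sub_le _ _) k.isLt⟩ : ℝ)

/-- The probability `P(X) = ∏ₖ rₖ(X)` of a sample path `X ∈ {-1,1}ⁿ` for the
history-cognizant coin with memory depth 1:
`rₖ(X) = ω₀ + ω₁·X_{k-1}` if `X_k = 1` and `1 - (ω₀ + ω₁·X_{k-1})` if `X_k = -1`,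
with `X₋₁ = xm1`. -/
noncomputable def coinPathProb (n : ℕ) (ω0 ω1 xm1 : ℝ)
    (X : Fin n → ({-1, 1} : Finset ℝ)) : ℝ :=
  ∏ k : Fin n,
    if (X k : ℝ) = 1 then ω0 + ω1 * prevOutcome n xm1 X k
    else 1 - (ω0 + ω1 * prevOutcome n xm1 X k)

-- abbreviations
local notation "Sgn" => (({-1, 1} : Finset ℝ) : Type)

lemma sgn_one_mem : (1 : ℝ) ∈ ({-1, 1} : Finset ℝ) := by norm_num
lemma sgn_neg_mem : (-1 : ℝ) ∈ ({-1, 1} : Finset ℝ) := by norm_num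

lemma sum_signs (f : Sgn → ℝ) :
    ∑ x, f x = f ⟨1, sgn_one_mem⟩ + f ⟨-1, sgn_neg_mem⟩ := by
  have h : (Finset.univ : Finset Sgn) = {⟨1, sgn_one_mem⟩, ⟨-1, sgn_neg_mem⟩} := by
    apply (Finset.eq_univ_of_forall ?_).symm
    intro x
    have hx := x.2
    simp only [Finset.mem_insert, Finset.mem_singleton] at hx ⊢
    rcases hx with h | h
    · right; exact Subtype.ext h
    · left; exact Subtype.ext h
  rw [h, Finset.sum_insert (by simp [Subtype.ext_iff]; norm_num), Finset.sum_singleton]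

lemma prev_cons_zero (n : ℕ) (xm1 : ℝ) (x0 : Sgn) (X : Fin n → Sgn) :
    prevOutcome (n+1) xm1 (Fin.cons x0 X) 0 = xm1 := rfl

lemma prev_cons_succ (n : ℕ) (xm1 : ℝ) (x0 : Sgn) (X : Fin n → Sgn) (k : Fin n) :
    prevOutcome (n+1) xm1 (Fin.cons x0 X) k.succ = prevOutcome n (x0 : ℝ) X k := by
  obtain ⟨kv, hk⟩ := k
  rcases kv with _ | j <;> rfl

lemma prob_cons (n : ℕ) (ω0 ω1 xm1 : ℝ) (x0 : Sgn) (X : Fin n → Sgn) :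
    coinPathProb (n+1) ω0 ω1 xm1 (Fin.cons x0 X) =
      (if (x0 : ℝ) = 1 then ω0 + ω1 * xm1 else 1 - (ω0 + ω1 * xm1)) *
        coinPathProb n ω0 ω1 (x0 : ℝ) X := by
  unfold coinPathProb
  rw [Fin.prod_univ_succ]
  simp only [Fin.cons_succ, prev_cons_succ, prev_cons_zero, Fin.cons_zero]

lemma prob_sum_one (ω0 ω1 : ℝ) : ∀ (n : ℕ) (xm1 : ℝ),
    ∑ X : Fin n → Sgn, coinPathProb n ω0 ω1 xm1 X = 1 := by
  intro n
  induction n with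
  | zero => intro xm1; simp [coinPathProb]
  | succ n ih =>
    intro xm1
    rw [← Fintype.sum_equiv (Fin.consEquiv (fun _ => Sgn))
      (fun p => coinPathProb (n+1) ω0 ω1 xm1 (Fin.cons p.1 p.2))
      (fun Y => coinPathProb (n+1) ω0 ω1 xm1 Y) (fun p => rfl)]
    rw [Fintype.sum_prod_type]
    have : ∀ x0 : Sgn, ∑ X : Fin n → Sgn, coinPathProb (n+1) ω0 ω1 xm1 (Fin.cons x0 X) =
        (if (x0 : ℝ) = 1 then ω0 + ω1 * xm1 else 1 - (ω0 + ω1 * xm1)) := by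
      intro x0
      simp only [prob_cons, ← Finset.mul_sum, ih]
      ring
    simp only [this]
    rw [sum_signs]
    norm_num

noncomputable def qfun (ω0 ω1 : ℝ) : ℕ → ℝ → ℝ
  | 0, x => ω0 + ω1 * x
  | (k+1), x => (ω0 + ω1 * x) * qfun ω0 ω1 k 1 + (1 - (ω0 + ω1 * x)) * qfun ω0 ω1 k (-1)

lemma expect_sum (ω0 ω1 : ℝ) (g : ℝ → ℝ) : ∀ (n : ℕ) (xm1 : ℝ),
    ∑ X : Fin n → Sgn, coinPathProb n ω0 ω1 xm1 X * ∑ k : Fin n, g (X k : ℝ) =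
      ∑ k ∈ Finset.range n, (qfun ω0 ω1 k xm1 * g 1 + (1 - qfun ω0 ω1 k xm1) * g (-1)) := by
  intro n
  induction n with
  | zero => intro xm1; simp
  | succ n ih =>
    intro xm1
    rw [← Fintype.sum_equiv (Fin.consEquiv (fun _ => Sgn))
      (fun p => coinPathProb (n+1) ω0 ω1 xm1 (Fin.cons p.1 p.2) *
        ∑ k : Fin (n+1), g ((Fin.cons p.1 p.2 : Fin (n+1) → Sgn) k : ℝ))
      (fun Y => coinPathProb (n+1) ω0 ω1 xm1 Y * ∑ k : Fin (n+1), g (Y k : ℝ))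
      (fun p => rfl)]
    rw [Fintype.sum_prod_type]
    have key : ∀ x0 : Sgn,
        ∑ X : Fin n → Sgn, coinPathProb (n+1) ω0 ω1 xm1 (Fin.cons x0 X) *
          ∑ k : Fin (n+1), g ((Fin.cons x0 X : Fin (n+1) → Sgn) k : ℝ) =
        (if (x0 : ℝ) = 1 then ω0 + ω1 * xm1 else 1 - (ω0 + ω1 * xm1)) *
          (g (x0 : ℝ) + ∑ k ∈ Finset.range n,
            (qfun ω0 ω1 k (x0 : ℝ) * g 1 + (1 - qfun ω0 ω1 k (x0 : ℝ)) * g (-1))) := by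
      intro x0
      have hsplit : ∀ X : Fin n → Sgn,
          ∑ k : Fin (n+1), g ((Fin.cons x0 X : Fin (n+1) → Sgn) k : ℝ) =
            g (x0 : ℝ) + ∑ k : Fin n, g (X k : ℝ) := by
        intro X
        rw [Fin.sum_univ_succ]
        simp [Fin.cons_zero, Fin.cons_succ]
      simp only [prob_cons, hsplit]
      have : ∀ X : Fin n → Sgn,
          (if (x0 : ℝ) = 1 then ω0 + ω1 * xm1 else 1 - (ω0 + ω1 * xm1)) *
            coinPathProb n ω0 ω1 (x0 : ℝ) X * (g (x0 : ℝ) + ∑ k : Fin n, g (X k : ℝ)) =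
          (if (x0 : ℝ) = 1 then ω0 + ω1 * xm1 else 1 - (ω0 + ω1 * xm1)) *
            (coinPathProb n ω0 ω1 (x0 : ℝ) X * g (x0 : ℝ) +
             coinPathProb n ω0 ω1 (x0 : ℝ) X * ∑ k : Fin n, g (X k : ℝ)) := by
        intro X; ring
      simp only [this]
      rw [← Finset.mul_sum, Finset.sum_add_distrib, ← Finset.sum_mul, prob_sum_one, ih]
      ring
    simp only [key]
    have hq0 : ∀ x : ℝ, qfun ω0 ω1 0 x = ω0 + ω1 * x := fun _ => rfl
    have hqs : ∀ (k : ℕ) (x : ℝ), qfun ω0 ω1 (k+1) x =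
        (ω0 + ω1 * x) * qfun ω0 ω1 k 1 + (1 - (ω0 + ω1 * x)) * qfun ω0 ω1 k (-1) :=
      fun _ _ => rfl
    have Hsum : ∑ k ∈ Finset.range (n+1),
        (qfun ω0 ω1 k xm1 * g 1 + (1 - qfun ω0 ω1 k xm1) * g (-1))
        = (ω0 + ω1 * xm1) * (g 1 + ∑ k ∈ Finset.range n,
            (qfun ω0 ω1 k 1 * g 1 + (1 - qfun ω0 ω1 k 1) * g (-1)))
          + (1 - (ω0 + ω1 * xm1)) * (g (-1) + ∑ k ∈ Finset.range n,
            (qfun ω0 ω1 k (-1) * g 1 + (1 - qfun ω0 ω1 k (-1)) * g (-1))) := by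
      rw [Finset.sum_range_succ', hq0]
      have hterm : ∀ k ∈ Finset.range n,
          qfun ω0 ω1 (k+1) xm1 * g 1 + (1 - qfun ω0 ω1 (k+1) xm1) * g (-1)
          = (ω0 + ω1 * xm1) * (qfun ω0 ω1 k 1 * g 1 + (1 - qfun ω0 ω1 k 1) * g (-1))
            + (1 - (ω0 + ω1 * xm1)) *
              (qfun ω0 ω1 k (-1) * g 1 + (1 - qfun ω0 ω1 k (-1)) * g (-1)) := by
        intro k _; rw [hqs]; ring
      rw [Finset.sum_congr rfl hterm, Finset.sum_add_distrib, ← Finset.mul_sum,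
        ← Finset.mul_sum]
      ring
    rw [sum_signs, Hsum]
    norm_num

lemma qfun_closed (ω0 ω1 : ℝ) (h1 : (1 : ℝ) - 2 * ω1 ≠ 0) (k : ℕ) (x : ℝ) :
    qfun ω0 ω1 k x = (ω0 - ω1) / (1 - 2 * ω1)
      + (2 * ω1) ^ k * (ω0 + ω1 * x - (ω0 - ω1) / (1 - 2 * ω1)) := by
  induction k generalizing x with
  | zero => simp [qfun]
  | succ k ih =>
    have hqs : qfun ω0 ω1 (k+1) x =
        (ω0 + ω1 * x) * qfun ω0 ω1 k 1 + (1 - (ω0 + ω1 * x)) * qfun ω0 ω1 k (-1) := rfl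
    rw [hqs, ih 1, ih (-1)]
    field_simp
    linear_combination (ω1 - ω0) * ω1 ^ k * 2 ^ k * mul_inv_cancel₀ h1

lemma qfun_mem (ω0 ω1 : ℝ) (hdiamond : |ω0 - 1/2| + |ω1| < 1/2) (k : ℕ) (x : ℝ)
    (hx : x = 1 ∨ x = -1) : qfun ω0 ω1 k x ∈ Set.Ioo (0 : ℝ) 1 := by
  have hp : ∀ y : ℝ, y = 1 ∨ y = -1 → ω0 + ω1 * y ∈ Set.Ioo (0 : ℝ) 1 := by
    intro y hy
    rcases abs_cases (ω0 - 1/2) with ⟨e1, e2⟩ | ⟨e1, e2⟩ <;>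
      rcases abs_cases ω1 with ⟨f1, f2⟩ | ⟨f1, f2⟩ <;>
      rcases hy with rfl | rfl <;>
      constructor <;> nlinarith
  induction k generalizing x with
  | zero => exact hp x hx
  | succ k ih =>
    have hqs : qfun ω0 ω1 (k+1) x =
        (ω0 + ω1 * x) * qfun ω0 ω1 k 1 + (1 - (ω0 + ω1 * x)) * qfun ω0 ω1 k (-1) := rfl
    obtain ⟨ha, hb⟩ := hp x hx
    obtain ⟨h1a, h1b⟩ := ih 1 (Or.inl rfl)
    obtain ⟨h2a, h2b⟩ := ih (-1) (Or.inr rfl)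
    rw [hqs]
    constructor <;> nlinarith

/-- Main theorem: for `n` flips of the history-cognizant coin with memory depth `m = 1`,
the expected logarithmic growth is uniquely maximized over `K ∈ (-1,1)` at
`Kₙ = 2(λₙ p₀ + (1-λₙ) p_∞) - 1`. -/
theorem optimal_fraction_memory_one (n : ℕ) (hn : 1 ≤ n) (ω0 ω1 xm1 : ℝ)
    (hdiamond : |ω0 - 1/2| + |ω1| < 1/2)
    (hx : xm1 = 1 ∨ xm1 = -1)
    (p0 pinf lam Kn : ℝ)
    (hp0 : p0 = ω0 + ω1 * xm1)
    (hpinf : pinf = (ω0 - ω1) / (1 - 2 * ω1))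
    (hlam : lam = (1 / (n : ℝ)) * ((1 - (2 * ω1) ^ n) / (1 - 2 * ω1)))
    (hKn : Kn = 2 * (lam * p0 + (1 - lam) * pinf) - 1) :
    Kn ∈ Set.Ioo (-1 : ℝ) 1 ∧
    ∀ K ∈ Set.Ioo (-1 : ℝ) 1, K ≠ Kn →
      (1 / (n : ℝ)) * ∑ X, coinPathProb n ω0 ω1 xm1 X *
          ∑ k : Fin n, Real.log (1 + K * (X k : ℝ))
        < (1 / (n : ℝ)) * ∑ X, coinPathProb n ω0 ω1 xm1 X *
            ∑ k : Fin n, Real.log (1 + Kn * (X k : ℝ)) := by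
  have hω1 : |ω1| < 1/2 := lt_of_le_of_lt (le_add_of_nonneg_left (abs_nonneg _)) hdiamond
  have hω1' := abs_lt.mp hω1
  have hden : (0:ℝ) < 1 - 2 * ω1 := by linarith [hω1'.2]
  have hdne : (1:ℝ) - 2 * ω1 ≠ 0 := ne_of_gt hden
  have h2ne1 : (2 * ω1 : ℝ) ≠ 1 := by intro h; rw [h] at hdne; norm_num at hdne
  have hnpos : (0:ℝ) < (n:ℝ) := by
    have : 0 < n := by omega
    exact_mod_cast this
  have hnne : (n:ℝ) ≠ 0 := ne_of_gt hnpos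
  set A : ℝ := ∑ k ∈ Finset.range n, qfun ω0 ω1 k xm1 with hAdef
  have hApos : 0 < A := by
    apply Finset.sum_pos (fun k _ => (qfun_mem ω0 ω1 hdiamond k xm1 hx).1)
    exact Finset.nonempty_range_iff.mpr (show n ≠ 0 by omega)
  have hAlt : A < (n:ℝ) := by
    have := Finset.sum_lt_sum_of_nonempty (Finset.nonempty_range_iff.mpr (show n ≠ 0 by omega))
      (fun k _ => (qfun_mem ω0 ω1 hdiamond k xm1 hx).2)
    simpa using this
  have hA : A = (n:ℝ) * pinf + (∑ k ∈ Finset.range n, (2*ω1)^k) * (p0 - pinf) := by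
    rw [hAdef]
    rw [Finset.sum_congr rfl (fun k _ => by
      rw [qfun_closed ω0 ω1 hdne k xm1, ← hpinf, ← hp0])]
    rw [Finset.sum_add_distrib, Finset.sum_const, Finset.card_range, nsmul_eq_mul,
      ← Finset.sum_mul]
  have hdne2 : (2 * ω1 - 1 : ℝ) ≠ 0 := by intro h; apply hdne; linarith
  have hKn' : Kn = 2 * (A / (n:ℝ)) - 1 := by
    rw [hKn, hlam, hA, geom_sum_eq h2ne1]
    field_simp
    ring
  have h1Kn : 0 < 1 + Kn := by
    have : 1 + Kn = 2 * A / (n:ℝ) := by rw [hKn']; ring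
    rw [this]; positivity
  have h2Kn : 0 < 1 - Kn := by
    have : 1 - Kn = 2 * ((n:ℝ) - A) / (n:ℝ) := by rw [hKn']; field_simp; ring
    rw [this]
    have : (0:ℝ) < (n:ℝ) - A := by linarith
    positivity
  have hE : ∀ K : ℝ, (∑ X : Fin n → Sgn, coinPathProb n ω0 ω1 xm1 X *
      ∑ k : Fin n, Real.log (1 + K * (X k : ℝ)))
      = A * Real.log (1 + K) + ((n:ℝ) - A) * Real.log (1 - K) := by
    intro K
    have h := expect_sum ω0 ω1 (fun t => Real.log (1 + K * t)) n xm1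
    simp only [mul_one, mul_neg_one, ← sub_eq_add_neg] at h
    rw [h, Finset.sum_add_distrib, ← Finset.sum_mul, ← Finset.sum_mul,
      Finset.sum_sub_distrib, Finset.sum_const, Finset.card_range, nsmul_eq_mul, mul_one,
      ← hAdef]
  constructor
  · have hdiv : A / (n:ℝ) < 1 := (div_lt_one hnpos).mpr hAlt
    have hdiv' : 0 < A / (n:ℝ) := div_pos hApos hnpos
    rw [hKn']
    constructor <;> [linarith; linarith]
  · intro K hK hne
    obtain ⟨hKa, hKb⟩ := hK
    have h1K : 0 < 1 + K := by linarith
    have h2K : 0 < 1 - K := by linarith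
    rw [hE K, hE Kn]
    apply mul_lt_mul_of_pos_left _ (by positivity : (0:ℝ) < 1 / (n:ℝ))
    set u : ℝ := (1 + K) / (1 + Kn) with hu
    set v : ℝ := (1 - K) / (1 - Kn) with hv
    have hupos : 0 < u := div_pos h1K h1Kn
    have hvpos : 0 < v := div_pos h2K h2Kn
    have hune : u ≠ 1 := by
      intro h
      rw [hu, div_eq_one_iff_eq (ne_of_gt h1Kn)] at h
      exact hne (by linarith)
    have hvne : v ≠ 1 := by
      intro h
      rw [hv, div_eq_one_iff_eq (ne_of_gt h2Kn)] at h
      exact hne (by linarith)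
    have hlu : Real.log u < u - 1 := Real.log_lt_sub_one_of_pos hupos hune
    have hlv : Real.log v < v - 1 := Real.log_lt_sub_one_of_pos hvpos hvne
    have hlogu : Real.log (1 + K) = Real.log (1 + Kn) + Real.log u := by
      rw [hu, Real.log_div (ne_of_gt h1K) (ne_of_gt h1Kn)]; ring
    have hlogv : Real.log (1 - K) = Real.log (1 - Kn) + Real.log v := by
      rw [hv, Real.log_div (ne_of_gt h2K) (ne_of_gt h2Kn)]; ring
    have hzero : A * (u - 1) + ((n:ℝ) - A) * (v - 1) = 0 := by
      have e1 : 1 + Kn = 2 * A / (n:ℝ) := by rw [hKn']; ring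
      have e2 : 1 - Kn = 2 * ((n:ℝ) - A) / (n:ℝ) := by rw [hKn']; field_simp; ring
      have hAne : A ≠ 0 := ne_of_gt hApos
      have hnAne : (n:ℝ) - A ≠ 0 := by intro h; nlinarith
      rw [hu, hv, e1, e2]
      field_simp
      ring
    have hAu : A * Real.log u < A * (u - 1) :=
      mul_lt_mul_of_pos_left hlu hApos
    have hBv : ((n:ℝ) - A) * Real.log v < ((n:ℝ) - A) * (v - 1) :=
      mul_lt_mul_of_pos_left hlv (by linarith)
    rw [hlogu, hlogv]
    linarith [hAu, hBv, hzero]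
end

section
/- Fix an integer n ≥ 1, reals ω₀, ω₁ with |ω₀ − 1/2| + |ω₁| < 1/2, and an initial outcome x₋₁ ∈ {−1,1}. Define p₀ = ω₀ + ω₁x₋₁, p_∞ = (ω₀ − ω₁)/(1 − 2ω₁), λ_n = (1/n)·(1 − (2ω₁)ⁿ)/(1 − 2ω₁), H_n(X) = #{0 ≤ k ≤ n−1 : X_k = 1}, and E(H_n) = Σ_X P(X)·H_n(X). Then E(H_n)/n = λ_n·p₀ + (1 − λ_n)·p_∞. -/
open Finset

/-- The number of heads in a sample path `X ∈ {-1,1}ⁿ`. -/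
noncomputable def numHeads (n : ℕ) (X : Fin n → ({-1, 1} : Finset ℝ)) : ℕ :=
  (Finset.univ.filter fun k : Fin n => (X k : ℝ) = 1).card

noncomputable def lastO (n : ℕ) (xm1 : ℝ) (Y : Fin n → ({-1, 1} : Finset ℝ)) : ℝ :=
  if _ : n = 0 then xm1 else (Y ⟨n - 1, by omega⟩ : ℝ)

lemma sum_snoc (n : ℕ) (f : (Fin (n+1) → ({-1,1} : Finset ℝ)) → ℝ) :
    ∑ X, f X = ∑ Y : Fin n → ({-1,1} : Finset ℝ), ∑ a : ({-1,1} : Finset ℝ),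
      f (Fin.snoc Y a) := by
  rw [← (Fin.snocEquiv (fun _ => ({-1,1} : Finset ℝ))).sum_comp f, Fintype.sum_prod_type]
  rw [Finset.sum_comm]
  rfl

lemma sum_pm (g : ℝ → ℝ) :
    ∑ a : ({-1,1} : Finset ℝ), g (a : ℝ) = g (-1) + g 1 := by
  rw [show (Finset.univ : Finset ({-1,1} : Finset ℝ)) = ({-1,1} : Finset ℝ).attach from rfl,
    Finset.sum_attach _ g]
  rw [show ({-1,1} : Finset ℝ) = insert (-1) {1} from rfl, Finset.sum_insert (by norm_num),
    Finset.sum_singleton]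

lemma prev_snoc_castSucc (n : ℕ) (xm1 : ℝ) (Y : Fin n → ({-1,1} : Finset ℝ))
    (a : ({-1,1} : Finset ℝ)) (k : Fin n) :
    prevOutcome (n+1) xm1 (Fin.snoc Y a) k.castSucc = prevOutcome n xm1 Y k := by
  unfold prevOutcome
  by_cases h : (k : ℕ) = 0
  · simp [h]
  · simp only [Fin.coe_castSucc, h, if_false]
    have hlt : (k : ℕ) - 1 < n := by omega
    have : (⟨(k : ℕ) - 1, Nat.lt_of_le_of_lt (Nat.sub_le _ _) (Fin.castSucc k).isLt⟩ : Fin (n+1))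
        = Fin.castSucc ⟨(k : ℕ) - 1, hlt⟩ := rfl
    rw [this, Fin.snoc_castSucc]

lemma prev_snoc_last (n : ℕ) (xm1 : ℝ) (Y : Fin n → ({-1,1} : Finset ℝ))
    (a : ({-1,1} : Finset ℝ)) :
    prevOutcome (n+1) xm1 (Fin.snoc Y a) (Fin.last n) = lastO n xm1 Y := by
  unfold prevOutcome lastO
  rcases Nat.eq_zero_or_pos n with h | h
  · subst h; simp
  · have hn : (Fin.last n : ℕ) ≠ 0 := by simp [Fin.last]; omega
    simp only [Fin.val_last, if_neg (by omega : ¬ n = 0), dif_neg (by omega : ¬ n = 0)]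
    have hlt : n - 1 < n := by omega
    have : (⟨n - 1, Nat.lt_of_le_of_lt (Nat.sub_le _ _) (Fin.last n).isLt⟩ : Fin (n+1))
        = Fin.castSucc ⟨n - 1, hlt⟩ := rfl
    rw [this, Fin.snoc_castSucc]

lemma coin_snoc (n : ℕ) (ω0 ω1 xm1 : ℝ) (Y : Fin n → ({-1,1} : Finset ℝ))
    (a : ({-1,1} : Finset ℝ)) :
    coinPathProb (n+1) ω0 ω1 xm1 (Fin.snoc Y a)
      = coinPathProb n ω0 ω1 xm1 Y *
        (if (a : ℝ) = 1 then ω0 + ω1 * lastO n xm1 Y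
         else 1 - (ω0 + ω1 * lastO n xm1 Y)) := by
  unfold coinPathProb
  rw [Fin.prod_univ_castSucc]
  congr 1
  · exact Finset.prod_congr rfl fun k _ => by
      rw [Fin.snoc_castSucc, prev_snoc_castSucc]
  · rw [Fin.snoc_last, prev_snoc_last]

lemma numHeads_cast (n : ℕ) (X : Fin n → ({-1,1} : Finset ℝ)) :
    (numHeads n X : ℝ) = ∑ k : Fin n, (if (X k : ℝ) = 1 then (1:ℝ) else 0) := by
  unfold numHeads
  rw [Finset.card_filter]
  push_cast
  rfl

lemma numHeads_snoc (n : ℕ) (Y : Fin n → ({-1,1} : Finset ℝ)) (a : ({-1,1} : Finset ℝ)) :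
    (numHeads (n+1) (Fin.snoc Y a) : ℝ)
      = (numHeads n Y : ℝ) + (if (a : ℝ) = 1 then (1:ℝ) else 0) := by
  rw [numHeads_cast, numHeads_cast, Fin.sum_univ_castSucc, Fin.snoc_last]
  congr 1
  exact Finset.sum_congr rfl fun k _ => by rw [Fin.snoc_castSucc]

lemma lastO_snoc (n : ℕ) (xm1 : ℝ) (Y : Fin n → ({-1,1} : Finset ℝ))
    (a : ({-1,1} : Finset ℝ)) :
    lastO (n+1) xm1 (Fin.snoc Y a) = (a : ℝ) := by
  unfold lastO
  rw [dif_neg (by omega : ¬ n + 1 = 0)]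
  have : (⟨n + 1 - 1, by omega⟩ : Fin (n+1)) = Fin.last n := rfl
  rw [this, Fin.snoc_last]

lemma sum_prob (n : ℕ) (ω0 ω1 xm1 : ℝ) :
    ∑ X, coinPathProb n ω0 ω1 xm1 X = 1 := by
  induction n with
  | zero =>
      rw [Finset.sum_congr rfl (fun X _ => by
        simp [coinPathProb] : ∀ X ∈ Finset.univ, coinPathProb 0 ω0 ω1 xm1 X = 1)]
      simp
  | succ n ih =>
    rw [sum_snoc]
    have key : ∀ Y : Fin n → ({-1,1} : Finset ℝ),
        ∑ a : ({-1,1} : Finset ℝ), coinPathProb (n+1) ω0 ω1 xm1 (Fin.snoc Y a)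
          = coinPathProb n ω0 ω1 xm1 Y := by
      intro Y
      simp only [coin_snoc]
      rw [sum_pm (fun x => coinPathProb n ω0 ω1 xm1 Y *
        (if x = 1 then ω0 + ω1 * lastO n xm1 Y else 1 - (ω0 + ω1 * lastO n xm1 Y)))]
      norm_num
      ring
    rw [Finset.sum_congr rfl (fun Y _ => key Y)]
    exact ih

lemma sum_last (n : ℕ) (ω0 ω1 xm1 : ℝ) (h1 : 1 - 2 * ω1 ≠ 0) :
    ∑ X, coinPathProb n ω0 ω1 xm1 X * lastO n xm1 X
      = (2*ω0-1)/(1-2*ω1) + (2*ω1)^n * (xm1 - (2*ω0-1)/(1-2*ω1)) := by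
  induction n with
  | zero =>
      rw [Finset.sum_congr rfl (fun X _ => by
        simp [coinPathProb, lastO] : ∀ X ∈ Finset.univ,
          coinPathProb 0 ω0 ω1 xm1 X * lastO 0 xm1 X = xm1)]
      simp
  | succ n ih =>
    rw [sum_snoc]
    have key : ∀ Y : Fin n → ({-1,1} : Finset ℝ),
        ∑ a : ({-1,1} : Finset ℝ),
          coinPathProb (n+1) ω0 ω1 xm1 (Fin.snoc Y a) * lastO (n+1) xm1 (Fin.snoc Y a)
          = coinPathProb n ω0 ω1 xm1 Y * ((2*ω0-1) + 2*ω1 * lastO n xm1 Y) := by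
      intro Y
      simp only [coin_snoc, lastO_snoc]
      rw [sum_pm (fun x => coinPathProb n ω0 ω1 xm1 Y *
        (if x = 1 then ω0 + ω1 * lastO n xm1 Y else 1 - (ω0 + ω1 * lastO n xm1 Y)) * x)]
      norm_num
      ring
    rw [Finset.sum_congr rfl (fun Y _ => key Y)]
    have expand : ∀ Y : Fin n → ({-1,1} : Finset ℝ),
        coinPathProb n ω0 ω1 xm1 Y * ((2*ω0-1) + 2*ω1 * lastO n xm1 Y)
          = (2*ω0-1) * coinPathProb n ω0 ω1 xm1 Y
            + 2*ω1 * (coinPathProb n ω0 ω1 xm1 Y * lastO n xm1 Y) := fun Y => by ring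
    rw [Finset.sum_congr rfl (fun Y _ => expand Y), Finset.sum_add_distrib,
      ← Finset.mul_sum, ← Finset.mul_sum, sum_prob, ih]
    field_simp
    ring

lemma sum_heads (n : ℕ) (ω0 ω1 xm1 : ℝ) (h1 : 1 - 2 * ω1 ≠ 0) :
    ∑ X, coinPathProb n ω0 ω1 xm1 X * (numHeads n X : ℝ)
      = (ω0-ω1)/(1-2*ω1) * n
        + ((ω0 + ω1*xm1) - (ω0-ω1)/(1-2*ω1)) * (1 - (2*ω1)^n) / (1-2*ω1) := by
  induction n with
  | zero =>
      rw [Finset.sum_congr rfl (fun X _ => by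
        simp [numHeads] : ∀ X ∈ Finset.univ,
          coinPathProb 0 ω0 ω1 xm1 X * (numHeads 0 X : ℝ) = 0)]
      simp
  | succ n ih =>
    rw [sum_snoc]
    have key : ∀ Y : Fin n → ({-1,1} : Finset ℝ),
        ∑ a : ({-1,1} : Finset ℝ),
          coinPathProb (n+1) ω0 ω1 xm1 (Fin.snoc Y a) * (numHeads (n+1) (Fin.snoc Y a) : ℝ)
          = coinPathProb n ω0 ω1 xm1 Y * (numHeads n Y : ℝ)
            + coinPathProb n ω0 ω1 xm1 Y * (ω0 + ω1 * lastO n xm1 Y) := by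
      intro Y
      simp only [coin_snoc, numHeads_snoc]
      rw [sum_pm (fun x => coinPathProb n ω0 ω1 xm1 Y *
        (if x = 1 then ω0 + ω1 * lastO n xm1 Y else 1 - (ω0 + ω1 * lastO n xm1 Y)) *
        ((numHeads n Y : ℝ) + (if x = 1 then (1:ℝ) else 0)))]
      norm_num
      ring
    rw [Finset.sum_congr rfl (fun Y _ => key Y), Finset.sum_add_distrib, ih]
    have expand : ∀ Y : Fin n → ({-1,1} : Finset ℝ),
        coinPathProb n ω0 ω1 xm1 Y * (ω0 + ω1 * lastO n xm1 Y)
          = ω0 * coinPathProb n ω0 ω1 xm1 Y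
            + ω1 * (coinPathProb n ω0 ω1 xm1 Y * lastO n xm1 Y) := fun Y => by ring
    rw [Finset.sum_congr rfl (fun Y _ => expand Y), Finset.sum_add_distrib,
      ← Finset.mul_sum, ← Finset.mul_sum, sum_prob, sum_last n ω0 ω1 xm1 h1]
    push_cast
    have h2 : 1 - ω1 * 2 ≠ 0 := by rwa [mul_comm]
    field_simp
    ring


/-- For the history-cognizant coin of memory depth 1, the expected fraction of heads is the
convex combination `E(Hₙ)/n = λₙ·p₀ + (1-λₙ)·p_∞`. -/
theorem expected_heads_convex_combination (n : ℕ) (hn : 1 ≤ n) (ω0 ω1 xm1 : ℝ)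
    (hdiamond : |ω0 - 1/2| + |ω1| < 1/2)
    (hx : xm1 = 1 ∨ xm1 = -1)
    (p0 pinf lam : ℝ)
    (hp0 : p0 = ω0 + ω1 * xm1)
    (hpinf : pinf = (ω0 - ω1) / (1 - 2 * ω1))
    (hlam : lam = (1 / (n : ℝ)) * ((1 - (2 * ω1) ^ n) / (1 - 2 * ω1))) :
    (∑ X, coinPathProb n ω0 ω1 xm1 X * (numHeads n X : ℝ)) / n
      = lam * p0 + (1 - lam) * pinf := by
  have hω1 : |ω1| < 1/2 := by
    have := abs_nonneg (ω0 - 1/2); linarith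
  have h1 : 1 - 2 * ω1 ≠ 0 := by
    rw [abs_lt] at hω1; intro h; linarith
  have hn' : (n : ℝ) ≠ 0 := by positivity
  rw [sum_heads n ω0 ω1 xm1 h1, hlam, hp0, hpinf]
  field_simp
  ring
end

section
/- Let n ≥ 1 and let P : {−1,1}ⁿ → ℝ be any probability mass function on sample paths. For 0 ≤ k ≤ n−1 let p_k = Σ_{X : X_k = 1} P(X), and assume 0 < p_k < 1 for every k. Then the time-varying expected logarithmic growth ELG(𝐊) = (1/n) Σ_X P(X) Σ_{k=0}^{n−1} log(1 + K̃_k·X_k) attains its unique maximum over 𝐊 ∈ (−1,1)ⁿ at the vector with components K̃_k = 2p_k − 1; i.e., ELG(𝐊) < ELG((2p₀−1,…,2p_{n−1}−1)) for every other 𝐊 ∈ (−1,1)ⁿ. -/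
open Finset

/-- The unconditional probability `p_k = Σ_{X : X_k = 1} P(X)` of a head on flip `k`
under an arbitrary probability mass function `P` on sample paths in `{-1,1}ⁿ`. -/
noncomputable def headProbOf (n : ℕ) (P : (Fin n → ({-1, 1} : Finset ℝ)) → ℝ)
    (k : Fin n) : ℝ :=
  ∑ X ∈ Finset.univ.filter (fun X : Fin n → ({-1, 1} : Finset ℝ) => (X k : ℝ) = 1), P X

lemma kelly_strict (p K : ℝ) (hp : 0 < p) (hp1 : p < 1) (hK : -1 < K) (hK1 : K < 1)
    (hne : K ≠ 2 * p - 1) :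
    p * Real.log (1 + K) + (1 - p) * Real.log (1 - K)
      < p * Real.log (1 + (2 * p - 1)) + (1 - p) * Real.log (1 - (2 * p - 1)) := by
  have h1K : 0 < 1 + K := by linarith
  have h2K : 0 < 1 - K := by linarith
  have h2p : 0 < 2 * p := by linarith
  have h2q : 0 < 2 - 2 * p := by linarith
  have hr1 : 0 < (1 + K) / (2 * p) := div_pos h1K h2p
  have hr2 : 0 < (1 - K) / (2 - 2 * p) := div_pos h2K h2q
  have hr1ne : (1 + K) / (2 * p) ≠ 1 := by
    intro h
    apply hne
    have := (div_eq_one_iff_eq (ne_of_gt h2p)).mp h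
    linarith
  have hr2ne : (1 - K) / (2 - 2 * p) ≠ 1 := by
    intro h
    apply hne
    have := (div_eq_one_iff_eq (ne_of_gt h2q)).mp h
    linarith
  have hl1 : Real.log ((1 + K) / (2 * p)) < (1 + K) / (2 * p) - 1 :=
    Real.log_lt_sub_one_of_pos hr1 hr1ne
  have hl2 : Real.log ((1 - K) / (2 - 2 * p)) < (1 - K) / (2 - 2 * p) - 1 :=
    Real.log_lt_sub_one_of_pos hr2 hr2ne
  rw [Real.log_div (ne_of_gt h1K) (ne_of_gt h2p)] at hl1
  rw [Real.log_div (ne_of_gt h2K) (ne_of_gt h2q)] at hl2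
  have e1 : (1 : ℝ) + (2 * p - 1) = 2 * p := by ring
  have e2 : (1 : ℝ) - (2 * p - 1) = 2 - 2 * p := by ring
  rw [e1, e2]
  have key : p * ((1 + K) / (2 * p) - 1) + (1 - p) * ((1 - K) / (2 - 2 * p) - 1) = 0 := by
    field_simp [(by linarith : (0:ℝ) < 1 - p).ne', ne_of_gt h2q, ne_of_gt h2p]
    ring
  nlinarith [mul_lt_mul_of_pos_left hl1 hp, mul_lt_mul_of_pos_left hl2 (by linarith : (0:ℝ) < 1 - p)]

/-- If `0 < pₖ < 1` for all `k`, the time-varying expected logarithmic growth attains its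
unique maximum over `𝐊 ∈ (-1,1)ⁿ` at the vector with components `K̃ₖ = 2pₖ - 1`. -/
theorem time_varying_elg_unique_max (n : ℕ) (hn : 1 ≤ n)
    (P : (Fin n → ({-1, 1} : Finset ℝ)) → ℝ)
    (hP0 : ∀ X, 0 ≤ P X)
    (hP1 : ∑ X, P X = 1)
    (hp : ∀ k : Fin n, 0 < headProbOf n P k ∧ headProbOf n P k < 1) :
    (∀ k : Fin n, (2 * headProbOf n P k - 1) ∈ Set.Ioo (-1 : ℝ) 1) ∧
    ∀ K : Fin n → ℝ, (∀ k, K k ∈ Set.Ioo (-1 : ℝ) 1) →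
      K ≠ (fun k => 2 * headProbOf n P k - 1) →
      (1 / (n : ℝ)) * ∑ X, P X * ∑ k : Fin n, Real.log (1 + K k * (X k : ℝ))
        < (1 / (n : ℝ)) * ∑ X, P X *
            ∑ k : Fin n, Real.log (1 + (2 * headProbOf n P k - 1) * (X k : ℝ)) := by
  -- rewrite the objective in terms of head probabilities
  have key : ∀ K : Fin n → ℝ,
      ∑ X, P X * ∑ k : Fin n, Real.log (1 + K k * (X k : ℝ))
        = ∑ k : Fin n, (headProbOf n P k * Real.log (1 + K k)
            + (1 - headProbOf n P k) * Real.log (1 - K k)) := by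
    intro K
    simp_rw [Finset.mul_sum]
    rw [Finset.sum_comm]
    refine Finset.sum_congr rfl fun k _ => ?_
    rw [← Finset.sum_filter_add_sum_filter_not Finset.univ
        (fun X : Fin n → ({-1, 1} : Finset ℝ) => (X k : ℝ) = 1)]
    have h1 : ∑ X ∈ Finset.univ.filter
        (fun X : Fin n → ({-1, 1} : Finset ℝ) => (X k : ℝ) = 1),
        P X * Real.log (1 + K k * (X k : ℝ))
        = headProbOf n P k * Real.log (1 + K k) := by
      rw [headProbOf, Finset.sum_mul]
      refine Finset.sum_congr rfl fun X hX => ?_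
      rw [Finset.mem_filter] at hX
      rw [hX.2, mul_one]
    have h2 : ∑ X ∈ Finset.univ.filter
        (fun X : Fin n → ({-1, 1} : Finset ℝ) => ¬ (X k : ℝ) = 1),
        P X * Real.log (1 + K k * (X k : ℝ))
        = (1 - headProbOf n P k) * Real.log (1 - K k) := by
      have hval : ∀ X ∈ Finset.univ.filter
          (fun X : Fin n → ({-1, 1} : Finset ℝ) => ¬ (X k : ℝ) = 1),
          (X k : ℝ) = -1 := by
        intro X hX
        rw [Finset.mem_filter] at hX
        have := (X k).2
        simp only [Finset.mem_insert, Finset.mem_singleton] at this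
        rcases this with h | h
        · exact h
        · exact absurd h hX.2
      have hq : ∑ X ∈ Finset.univ.filter
          (fun X : Fin n → ({-1, 1} : Finset ℝ) => ¬ (X k : ℝ) = 1), P X
          = 1 - headProbOf n P k := by
        have := Finset.sum_filter_add_sum_filter_not Finset.univ
          (fun X : Fin n → ({-1, 1} : Finset ℝ) => (X k : ℝ) = 1) P
        rw [hP1] at this
        rw [headProbOf]
        linarith
      rw [← hq, Finset.sum_mul]
      refine Finset.sum_congr rfl fun X hX => ?_
      rw [hval X hX]
      ring_nf
    rw [h1, h2]
  have hIoo : ∀ k : Fin n, (2 * headProbOf n P k - 1) ∈ Set.Ioo (-1 : ℝ) 1 := by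
    intro k
    obtain ⟨h1, h2⟩ := hp k
    exact ⟨by linarith, by linarith⟩
  refine ⟨hIoo, fun K hK hKne => ?_⟩
  rw [key K, key]
  have hnpos : (0 : ℝ) < 1 / (n : ℝ) := by
    have : (0 : ℝ) < (n : ℝ) := by exact_mod_cast hn
    positivity
  refine mul_lt_mul_of_pos_left ?_ hnpos
  obtain ⟨k0, hk0⟩ := Function.ne_iff.mp hKne
  refine Finset.sum_lt_sum (fun k _ => ?_) ⟨k0, Finset.mem_univ k0, ?_⟩
  · by_cases h : K k = 2 * headProbOf n P k - 1
    · rw [h]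
    · exact le_of_lt (kelly_strict _ _ (hp k).1 (hp k).2 (hK k).1 (hK k).2 h)
  · exact kelly_strict _ _ (hp k0).1 (hp k0).2 (hK k0).1 (hK k0).2 hk0
end

section
/- Let m ≥ 1 and let ω₀, ω₁, …, ω_m be reals with |ω₀ − 1/2| + Σ_{i=1}^m |ω_i| < 1/2. Let (p_k)_{k ≥ −m} be any real sequence with p_{−1},…,p_{−m} ∈ [0,1] satisfying p_k = ω₀ − Σ_{i=1}^m ω_i + 2 Σ_{i=1}^m ω_i·p_{k−i} for all k ≥ 0. Then p_k converges as k → ∞ to p_∞ = (ω₀ − Σ_{i=1}^m ω_i)/(1 − 2 Σ_{i=1}^m ω_i). -/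
/-- Under the hyperdiamond constraint, any solution of the depth-`m` recursion
`p_k = ω₀ - Σᵢ ωᵢ + 2 Σᵢ ωᵢ·p_{k-i}` (here `ω i` encodes `ω_{i+1}`, so `p_{k-(i+1)}`
appears as `p (k - i - 1)`) with initial values `p_{-1},…,p_{-m} ∈ [0,1]` converges to
the steady state `p_∞ = (ω₀ - Σᵢ ωᵢ)/(1 - 2Σᵢ ωᵢ)`. -/
theorem depth_m_recursion_tendsto_steady_state (m : ℕ) (hm : 1 ≤ m)
    (ω0 : ℝ) (ω : Fin m → ℝ)
    (hdiamond : |ω0 - 1/2| + ∑ i, |ω i| < 1/2)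
    (p : ℤ → ℝ)
    (hinit : ∀ i : Fin m, p (-(i : ℤ) - 1) ∈ Set.Icc (0 : ℝ) 1)
    (hrec : ∀ k : ℤ, 0 ≤ k →
      p k = ω0 - ∑ i, ω i + 2 * ∑ i : Fin m, ω i * p (k - (i : ℤ) - 1)) :
    Filter.Tendsto (fun k : ℕ => p (k : ℤ)) Filter.atTop
      (nhds ((ω0 - ∑ i, ω i) / (1 - 2 * ∑ i, ω i))) := by
  set S := ∑ i, ω i with hSdef
  set A := ∑ i, |ω i| with hAdef
  have hA : A < 1/2 := lt_of_le_of_lt (le_add_of_nonneg_left (abs_nonneg _)) hdiamond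
  have hSA : |S| ≤ A := Finset.abs_sum_le_sum_abs _ _
  have hA0 : 0 ≤ A := Finset.sum_nonneg fun i _ => abs_nonneg _
  set r := 2 * A with hrdef
  have hr0 : 0 ≤ r := by positivity
  have hr1 : r < 1 := by rw [hrdef]; linarith
  have hden : 0 < 1 - 2 * S := by
    have := abs_le.mp hSA; linarith
  set q := (ω0 - S) / (1 - 2 * S) with hqdef
  have hq : q = (ω0 - S) + 2 * S * q := by
    have h : q * (1 - 2 * S) = ω0 - S := by rw [hqdef]; exact div_mul_cancel₀ _ hden.ne'
    linear_combination h
  have herec : ∀ k : ℤ, 0 ≤ k →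
      p k - q = 2 * ∑ i : Fin m, ω i * (p (k - (i : ℤ) - 1) - q) := by
    intro k hk
    have h1 := hrec k hk
    have h2 : ∑ i : Fin m, ω i * (p (k - (i : ℤ) - 1) - q)
        = (∑ i : Fin m, ω i * p (k - (i : ℤ) - 1)) - S * q := by
      rw [hSdef, Finset.sum_mul]
      rw [← Finset.sum_sub_distrib]
      congr 1 with i
      ring
    rw [h2]
    linarith [h1, hq]
  set M := 1 + |q| with hMdef
  have hM0 : (0:ℝ) ≤ M := by positivity
  have hMneg : ∀ j : ℤ, -(m:ℤ) ≤ j → j < 0 → |p j - q| ≤ M := by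
    intro j hjm hj0
    have hnn : (0:ℤ) ≤ -j - 1 := by omega
    set t := (-j - 1).toNat with htdef
    have ht : (t : ℤ) = -j - 1 := Int.toNat_of_nonneg hnn
    have htm : t < m := by omega
    have hinit' := hinit ⟨t, htm⟩
    have hcoe : ((⟨t, htm⟩ : Fin m) : ℤ) = (t : ℤ) := rfl
    rw [hcoe] at hinit'
    have hj : -(t:ℤ) - 1 = j := by omega
    rw [hj] at hinit'
    obtain ⟨h0, h1⟩ := hinit'
    have : |p j| ≤ 1 := abs_le.mpr ⟨by linarith, h1⟩
    calc |p j - q| ≤ |p j| + |q| := abs_sub _ _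
      _ ≤ 1 + |q| := by linarith
      _ = M := hMdef.symm
  have key : ∀ k : ℕ, |p (k:ℤ) - q| ≤ M * r ^ (k / m + 1) := by
    intro k
    induction k using Nat.strong_induction_on with
    | _ k ih =>
      have hterm : ∀ i : Fin m, |p ((k:ℤ) - (i:ℤ) - 1) - q| ≤ M * r ^ (k / m) := by
        intro i
        have hi : (i : ℤ) < m := by exact_mod_cast i.isLt
        have hi0 : (0:ℤ) ≤ (i:ℤ) := Int.ofNat_nonneg _
        by_cases hcase : (k:ℤ) - (i:ℤ) - 1 < 0
        · have hkm : k < m := by omega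
          have hkm0 : k / m = 0 := Nat.div_eq_of_lt hkm
          rw [hkm0, pow_zero, mul_one]
          exact hMneg _ (by omega) hcase
        · push_neg at hcase
          set j := ((k:ℤ) - (i:ℤ) - 1).toNat with hjdef
          have hj : (j:ℤ) = (k:ℤ) - (i:ℤ) - 1 := Int.toNat_of_nonneg hcase
          have hjk : j < k := by omega
          have h1 := ih j hjk
          have hdiv : k / m ≤ j / m + 1 := by
            have hle : k ≤ j + m := by omega
            calc k / m ≤ (j + m) / m := Nat.div_le_div_right hle
              _ = j / m + 1 := Nat.add_div_right j (by omega)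
          calc |p ((k:ℤ) - (i:ℤ) - 1) - q| = |p (j:ℤ) - q| := by rw [hj]
            _ ≤ M * r ^ (j / m + 1) := h1
            _ ≤ M * r ^ (k / m) := by
                apply mul_le_mul_of_nonneg_left _ hM0
                exact pow_le_pow_of_le_one hr0 hr1.le hdiv
      have hrw := herec (k:ℤ) (Int.ofNat_nonneg k)
      rw [hrw]
      calc |2 * ∑ i : Fin m, ω i * (p ((k:ℤ) - (i:ℤ) - 1) - q)|
          = 2 * |∑ i : Fin m, ω i * (p ((k:ℤ) - (i:ℤ) - 1) - q)| := by
            rw [abs_mul]; norm_num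
        _ ≤ 2 * ∑ i : Fin m, |ω i * (p ((k:ℤ) - (i:ℤ) - 1) - q)| := by
            gcongr
            exact Finset.abs_sum_le_sum_abs _ _
        _ ≤ 2 * ∑ i : Fin m, |ω i| * (M * r ^ (k / m)) := by
            gcongr 2 * ?_
            apply Finset.sum_le_sum
            intro i _
            rw [abs_mul]
            exact mul_le_mul_of_nonneg_left (hterm i) (abs_nonneg _)
        _ = r * (M * r ^ (k / m)) := by
            rw [← Finset.sum_mul, ← hAdef, hrdef]; ring
        _ = M * r ^ (k / m + 1) := by ring
  have hdivTop : Filter.Tendsto (fun k : ℕ => k / m + 1) Filter.atTop Filter.atTop := by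
    apply Filter.tendsto_atTop_atTop.mpr
    intro b
    refine ⟨b * m, fun k hk => ?_⟩
    have : b ≤ k / m := (Nat.le_div_iff_mul_le (by omega)).mpr hk
    omega
  have hpow : Filter.Tendsto (fun n : ℕ => r ^ n) Filter.atTop (nhds 0) :=
    tendsto_pow_atTop_nhds_zero_of_lt_one hr0 hr1
  have hg : Filter.Tendsto (fun k : ℕ => M * r ^ (k / m + 1)) Filter.atTop (nhds 0) := by
    have := (hpow.comp hdivTop).const_mul M
    simpa using this
  have hzero : Filter.Tendsto (fun k : ℕ => p (k:ℤ) - q) Filter.atTop (nhds 0) := by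
    apply squeeze_zero_norm (fun k => ?_) hg
    simpa [Real.norm_eq_abs] using key k
  have := hzero.add_const q
  simpa using this
end
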